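/- Theorem 1 (task decomposability): Suppose R is a reward machine over Σ, Σ₁,...,Σ_N are subsets with ∪ᵢ Σᵢ = Σ, R₁,...,R_N are the projections of R onto the Σᵢ, and R is bisimilar to the parallel composition R₁ ∥ ... ∥ R_N. Then for any event sequence ξ ∈ Σ*, R(ξ) = 1 if and only if Rᵢ(Pᵢ(ξ)) = 1 for all i = 1,...,N. -/

import Mathlib

structure RMA (E : Type) where
  U : Type
  finite : Finite U
  alph : Set E
  init : U
  trans : U → E → Option U
  F : Set U

def Bisim {E : Type} (R1 R2 : RMA E) : Prop :=
  ∃ r : R1.U → R2.U → Prop,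
    r R1.init R2.init ∧
    ∀ u1 u2, r u1 u2 →
      (u1 ∈ R1.F ↔ u2 ∈ R2.F) ∧
      (∀ e u1', R1.trans u1 e = some u1' →
        ∃ u2', R2.trans u2 e = some u2' ∧ r u1' u2') ∧
      (∀ e u2', R2.trans u2 e = some u2' →
        ∃ u1', R1.trans u1 e = some u1' ∧ r u1' u2')

def ProjConds {U E : Type} (δ : U → E → Option U) (Sigi : Set E)
    (s : Setoid U) : Prop :=
  (∀ u1 u2 e, δ u1 e = some u2 → e ∉ Sigi → s.r u1 u2) ∧
  (∀ u1 u1' u2 u2' e, s.r u1 u1' → e ∈ Sigi →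
    δ u1 e = some u2 → δ u1' e = some u2' → s.r u2 u2')

/-- The smallest equivalence relation `∼ᵢ` defining the RM projection. -/
def projSetoid {U E : Type} (δ : U → E → Option U) (Sigi : Set E) :
    Setoid U :=
  sInf {s | ProjConds δ Sigi s}

open Classical in
/-- The projection of the reward machine `R` onto the local event set
`Sigi`: states are equivalence classes of `∼ᵢ`, a local event moves a
class to the (unique) class of successors, and final classes are those
containing a final state of `R`. -/
noncomputable def projRM {E : Type} (R : RMA E) (Sigi : Set E) : RMA E where
  U := Quotient (projSetoid R.trans Sigi)
  finite := by have := R.finite; infer_instance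
  alph := Sigi
  init := Quotient.mk (projSetoid R.trans Sigi) R.init
  trans := fun q e =>
    if h : e ∈ Sigi ∧ ∃ u u', Quotient.mk (projSetoid R.trans Sigi) u = q ∧
        R.trans u e = some u' then
      some (Quotient.mk (projSetoid R.trans Sigi) h.2.choose_spec.choose)
    else none
  F := {q | ∃ u ∈ R.F, Quotient.mk (projSetoid R.trans Sigi) u = q}

def runRM {U E : Type} (δ : U → E → Option U) : U → List E → Option U
  | u, [] => some u
  | u, e :: ξ => (δ u e).bind (fun u' => runRM δ u' ξ)

def natProj {α : Type*} (Sig : Set α) [DecidablePred (· ∈ Sig)] : List α → List α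
  | [] => []
  | e :: ξ => if e ∈ Sig then e :: natProj Sig ξ else natProj Sig ξ

/-- `R(ξ) = 1`: the run of `R` on `ξ` is defined and reaches a final state. -/
def Accept {E : Type} (R : RMA E) (ξ : List E) : Prop :=
  ∃ u, runRM R.trans R.init ξ = some u ∧ u ∈ R.F

open Classical in
/-- `N`-ary parallel composition. -/
noncomputable def parN {E : Type} {N : ℕ} (R : Fin N → RMA E) : RMA E where
  U := ∀ i, (R i).U
  finite := by have := fun i => (R i).finite; infer_instance
  alph := ⋃ i, (R i).alph
  init := fun i => (R i).init
  trans := fun u e =>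
    if (∃ i, e ∈ (R i).alph) ∧
        (∀ i, e ∈ (R i).alph → ((R i).trans (u i) e).isSome) then
      some (fun i =>
        if e ∈ (R i).alph then ((R i).trans (u i) e).getD (u i) else u i)
    else none
  F := {u | ∀ i, u i ∈ (R i).F}

lemma bisim_accept {E : Type} {R1 R2 : RMA E} (h : Bisim R1 R2) (ξ : List E) :
    Accept R1 ξ ↔ Accept R2 ξ := by
  obtain ⟨r, hinit, hstep⟩ := h
  suffices key : ∀ ξ (u1 : R1.U) (u2 : R2.U), r u1 u2 →
      ((∃ v1, runRM R1.trans u1 ξ = some v1 ∧ v1 ∈ R1.F) ↔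
       (∃ v2, runRM R2.trans u2 ξ = some v2 ∧ v2 ∈ R2.F)) from
    key ξ _ _ hinit
  intro ξ
  induction ξ with
  | nil =>
    intro u1 u2 hr
    simp only [runRM, Option.some_inj]
    constructor
    · rintro ⟨v1, rfl, hF⟩; exact ⟨u2, rfl, ((hstep _ _ hr).1).mp hF⟩
    · rintro ⟨v2, rfl, hF⟩; exact ⟨u1, rfl, ((hstep _ _ hr).1).mpr hF⟩
  | cons e ξ ih =>
    intro u1 u2 hr
    constructor
    · rintro ⟨v1, hrun, hF⟩
      simp only [runRM] at hrun
      obtain ⟨w1, h1, h2⟩ := Option.bind_eq_some_iff.mp hrun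
      obtain ⟨w2, hw2, hrw⟩ := (hstep _ _ hr).2.1 e w1 h1
      obtain ⟨v2, hv2, hFv2⟩ := (ih w1 w2 hrw).mp ⟨v1, h2, hF⟩
      exact ⟨v2, by simp [runRM, hw2, hv2], hFv2⟩
    · rintro ⟨v2, hrun, hF⟩
      simp only [runRM] at hrun
      obtain ⟨w2, h1, h2⟩ := Option.bind_eq_some_iff.mp hrun
      obtain ⟨w1, hw1, hrw⟩ := (hstep _ _ hr).2.2 e w2 h1
      obtain ⟨v1, hv1, hFv1⟩ := (ih w1 w2 hrw).mpr ⟨v2, h2, hF⟩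
      exact ⟨v1, by simp [runRM, hw1, hv1], hFv1⟩

open Classical in
lemma parN_run {E : Type} {N : ℕ} (Rs : Fin N → RMA E) (ξ : List E) :
    ∀ u v : ∀ i, (Rs i).U,
    runRM (parN Rs).trans u ξ = some v ↔
      ((∀ e ∈ ξ, ∃ i, e ∈ (Rs i).alph) ∧
       ∀ i, runRM (Rs i).trans (u i) (natProj ((Rs i).alph) ξ) = some (v i)) := by
  induction ξ with
  | nil =>
    intro u v
    simp only [runRM, natProj, Option.some_inj, List.not_mem_nil,
      false_implies, implies_true, true_and]
    constructor
    · intro h; injection h with h; subst h; intro i; rfl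
    · intro h; congr 1; funext i; exact h i
  | cons e ξ ih =>
    intro u v
    constructor
    · intro h
      simp only [runRM] at h
      obtain ⟨w, hw, hrun⟩ := Option.bind_eq_some_iff.mp h
      simp only [parN] at hw
      have hc : (∃ i, e ∈ (Rs i).alph) ∧
          (∀ i, e ∈ (Rs i).alph → ((Rs i).trans (u i) e).isSome) := by
        by_contra hc
        rw [if_neg hc] at hw
        cases hw
      rw [if_pos hc] at hw
      injection hw with hw
      obtain ⟨hcov, hruns⟩ := (ih w v).mp hrun
      refine ⟨?_, ?_⟩
      · intro e' he'
        rcases List.mem_cons.mp he' with rfl | he'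
        · exact hc.1
        · exact hcov e' he'
      · intro i
        by_cases hei : e ∈ (Rs i).alph
        · simp only [natProj, if_pos hei, runRM]
          obtain ⟨wi, hwi⟩ := Option.isSome_iff_exists.mp (hc.2 i hei)
          have hwiw : w i = wi := by
            rw [← hw]; simp [if_pos hei, hwi]
          rw [hwi]
          simpa [Option.bind, hwiw] using hruns i
        · simp only [natProj, if_neg hei]
          have hwiw : w i = u i := by rw [← hw]; simp [if_neg hei]
          rw [← hwiw]; exact hruns i
    · rintro ⟨hcov, hruns⟩
      have hex : ∃ i, e ∈ (Rs i).alph := hcov e List.mem_cons_self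
      have hall : ∀ i, e ∈ (Rs i).alph → ((Rs i).trans (u i) e).isSome := by
        intro i hei
        have := hruns i
        simp only [natProj, if_pos hei, runRM] at this
        obtain ⟨wi, hwi, -⟩ := Option.bind_eq_some_iff.mp this
        simp [hwi]
      set w : ∀ i, (Rs i).U := fun i =>
        if e ∈ (Rs i).alph then ((Rs i).trans (u i) e).getD (u i) else u i with hwdef
      have hstep : (parN Rs).trans u e = some w := by
        simp only [parN, if_pos (And.intro hex hall)]
        rfl
      have hruns' : ∀ i, runRM (Rs i).trans (w i) (natProj ((Rs i).alph) ξ)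
          = some (v i) := by
        intro i
        by_cases hei : e ∈ (Rs i).alph
        · have := hruns i
          simp only [natProj, if_pos hei, runRM] at this
          obtain ⟨wi, hwi, hrest⟩ := Option.bind_eq_some_iff.mp this
          have : w i = wi := by simp [hwdef, if_pos hei, hwi]
          rw [this]; exact hrest
        · have hwiw : w i = u i := by simp [hwdef, if_neg hei]
          rw [hwiw]
          have := hruns i
          simpa only [natProj, if_neg hei] using this
      have hcov' : ∀ e' ∈ ξ, ∃ i, e' ∈ (Rs i).alph :=
        fun e' he' => hcov e' (List.mem_cons_of_mem e he')
      have := (ih w v).mpr ⟨hcov', hruns'⟩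
      simp [runRM, hstep, this]
      exact this

open Classical in
/-- Theorem 1 (task decomposability): if `∪ᵢ Σᵢ = Σ` and `R` is bisimilar
to the parallel composition of its projections `R₁, ..., R_N`, then an
event sequence `ξ ∈ Σ*` is accepted by `R` iff every projection `Rᵢ`
accepts the natural projection `Pᵢ(ξ)`. -/
theorem task_decomposability {E : Type} (R : RMA E) {N : ℕ}
    (Sigs : Fin N → Set E)
    (hcover : (⋃ i, Sigs i) = R.alph)
    (hbisim : Bisim R (parN (fun i => projRM R (Sigs i))))
    (ξ : List E) (hξ : ∀ e ∈ ξ, e ∈ R.alph) :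
    Accept R ξ ↔ ∀ i, Accept (projRM R (Sigs i)) (natProj (Sigs i) ξ) := by
  set Rs : Fin N → RMA E := fun i => projRM R (Sigs i) with hRs
  have halph : ∀ i, (Rs i).alph = Sigs i := fun i => rfl
  rw [bisim_accept hbisim]
  constructor
  · rintro ⟨v, hrun, hF⟩
    obtain ⟨hcov, hruns⟩ := (parN_run Rs ξ _ v).mp hrun
    intro i
    exact ⟨v i, hruns i, hF i⟩
  · intro h
    choose v hv1 hv2 using h
    refine ⟨fun i => v i, ?_, fun i => hv2 i⟩
    refine (parN_run Rs ξ _ _).mpr ⟨?_, fun i => hv1 i⟩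
    intro e he
    have : e ∈ ⋃ i, Sigs i := hcover ▸ hξ e he
    exact Set.mem_iUnion.mp this
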